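/- Suppose M is a reduced R-module and N a proper submodule of M. Then N is a weakly classical prime submodule of M if and only if N is both a weakly semiprime submodule and a weakly classical 1-absorbing prime submodule of M. -/
import Mathlib


/-- A proper submodule `N` of `M` is weakly classical 1-absorbing prime if whenever
`abcm ∈ N` and `abcm ≠ 0` for nonunits `a, b, c ∈ R` and `m ∈ M`, then `abm ∈ N` or `cm ∈ N`. -/
def IsWeaklyClassical1AbsorbingPrime {R : Type*} [CommRing R] {M : Type*} [AddCommGroup M]
    [Module R M] (N : Submodule R M) : Prop :=
  N ≠ ⊤ ∧ ∀ a b c : R, ∀ m : M, ¬ IsUnit a → ¬ IsUnit b → ¬ IsUnit c →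
    (a * b * c) • m ∈ N → (a * b * c) • m ≠ 0 → ((a * b) • m ∈ N ∨ c • m ∈ N)

/-- A proper ideal `I` of `R` is weakly 1-absorbing prime if whenever `abc ∈ I` and
`abc ≠ 0` for nonunits `a, b, c ∈ R`, then `ab ∈ I` or `c ∈ I`. -/
def IsWeakly1AbsorbingPrimeIdeal {R : Type*} [CommRing R] (I : Ideal R) : Prop :=
  I ≠ ⊤ ∧ ∀ a b c : R, ¬ IsUnit a → ¬ IsUnit b → ¬ IsUnit c →
    a * b * c ∈ I → a * b * c ≠ 0 → (a * b ∈ I ∨ c ∈ I)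

/-- If `M` is a reduced `R`-module and `N` a proper submodule, then `N` is
weakly classical prime iff `N` is both weakly semiprime and weakly classical 1-absorbing
prime. -/
theorem stmt_7 {R : Type*} [CommRing R] [Nontrivial R] {M : Type*} [AddCommGroup M]
    [Module R M] [Nontrivial M] (N : Submodule R M) (hN : N ≠ ⊤)
    (hred : ∀ (a : R) (m : M), (a * a) • m = 0 → a • m = 0) :
    -- weakly classical prime
    (∀ a b : R, ∀ m : M, (a * b) • m ∈ N → (a * b) • m ≠ 0 → (a • m ∈ N ∨ b • m ∈ N)) ↔
      -- weakly semiprime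
      ((∀ (a : R) (m : M), (a * a) • m ∈ N → (a * a) • m ≠ 0 → a • m ∈ N) ∧
        -- weakly classical 1-absorbing prime
        IsWeaklyClassical1AbsorbingPrime N) := by
  constructor
  · intro h
    refine ⟨fun a m hm hne => ?_, hN, fun a b c m _ _ _ hmem hne => h (a * b) c m hmem hne⟩
    rcases h a a m hm hne with h1 | h1 <;> exact h1
  · rintro ⟨hsemi, -, habs⟩ a b m hm hne
    by_cases ha : IsUnit a
    · right
      obtain ⟨u, rfl⟩ := ha
      have : b • m = (↑u⁻¹ * (↑u * b)) • m := by rw [Units.inv_mul_cancel_left]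
      rw [this, mul_smul]
      exact N.smul_mem _ hm
    by_cases hb : IsUnit b
    · left
      obtain ⟨u, rfl⟩ := hb
      have : a • m = (↑u⁻¹ * (a * ↑u)) • m := by
        rw [mul_comm a, Units.inv_mul_cancel_left]
      rw [this, mul_smul]
      exact N.smul_mem _ hm
    have hmem : (a * a * b) • m ∈ N := by
      have : (a * a * b) • m = a • ((a * b) • m) := by
        rw [smul_smul]; ring_nf
      rw [this]; exact N.smul_mem _ hm
    have hne2 : (a * a * b) • m ≠ 0 := by
      intro h0
      apply hne
      apply hred (a * b) m
      have : (a * b * (a * b)) • m = b • ((a * a * b) • m) := by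
        rw [smul_smul]; ring_nf
      rw [this, h0, smul_zero]
    rcases habs a a b m ha ha hb hmem hne2 with h1 | h1
    · left
      by_cases h0 : (a * a) • m = 0
      · rw [hred a m h0]; exact N.zero_mem
      · exact hsemi a m h1 h0
    · right; exact h1
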